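/- Let A be an n-dimensional naturally graded p-filiform non-unital associative algebra over ℂ (p ≥ 1, n − p ≥ 4) with natural grading (𝒜_i), write s_i = dim 𝒜_i − 1, and let {e_1, …, e_{n−p}, f_1, …, f_p} be a homogeneous adapted basis as produced by Lemma 3.3 (so that f_{s_1+⋯+s_k+i}·e_j = f_{s_1+⋯+s_{k+j}+i} for 1 ≤ i ≤ s_{k+j+1}, and = 0 for s_{k+j+1}+1 ≤ i ≤ s_{k+j}). Then f_{s_1+⋯+s_k+i}·f_{s_1+⋯+s_t+j} = 0 for all k, t with 1 ≤ k ≤ n − p − 4, 1 ≤ t ≤ n − p − 3 − k, and all i, j with s_{k+2} + 1 ≤ i ≤ s_{k+1} and s_{t+2} + 1 ≤ j ≤ s_{t+1}. -/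

import Mathlib

set_option maxHeartbeats 1000000
set_option linter.unusedSectionVars false


variable (A : Type*) [NonUnitalRing A] [Module ℂ A] [SMulCommClass ℂ A A] [IsScalarTower ℂ A A]

/-- Product of two submodules of a non-unital algebra: the span of all pairwise
products. In particular `pmul A ⊤ ⊤` is `A²`, the span of all products `x·y`. -/
def pmul (I J : Submodule ℂ A) : Submodule ℂ A :=
  Submodule.span ℂ (Set.image2 (· * ·) (I : Set A) (J : Set A))

/-- The series of powers `A^1 = A`, `A^{i+1} = Σ_{k=1}^{i} A^k · A^{i+1-k}`.
(`algPow A 0` is junk, set to `⊤`.) -/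
def algPow : ℕ → Submodule ℂ A
  | 0 => ⊤
  | 1 => ⊤
  | n + 2 => ⨆ k : Fin (n + 1), pmul A (algPow (k + 1)) (algPow (n + 1 - k))
  termination_by n => n
  decreasing_by
  · omega
  · omega

/-- An algebra is nilpotent if some power `A^m` (`m ≥ 1`) vanishes. -/
def IsNilpotentAlg : Prop :=
  ∃ m : ℕ, 1 ≤ m ∧ algPow A m = ⊥

/-- A natural grading of `A`: a family of submodules `𝒜 1, 𝒜 2, …` (with `𝒜 0 = ⊥`)
such that `A` is their internal direct sum, `𝒜 i · 𝒜 j ⊆ 𝒜 (i+j)` and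
`𝒜 (i+1) = 𝒜 1 · 𝒜 i`. -/
structure IsNaturalGrading (𝒜 : ℕ → Submodule ℂ A) : Prop where
  zero : 𝒜 0 = ⊥
  internal : DirectSum.IsInternal 𝒜
  mul_le : ∀ i j, 1 ≤ i → 1 ≤ j → pmul A (𝒜 i) (𝒜 j) ≤ 𝒜 (i + j)
  succ : ∀ i, 1 ≤ i → 𝒜 (i + 1) = pmul A (𝒜 1) (𝒜 i)

/-- `x ∈ A ∖ A²` realizes the characteristic sequence `(n-p, 1, …, 1)`:
the left multiplication `L_x` satisfies `L_x^{n-p-1} ≠ 0` and `rank L_x = n-p-1`. -/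
def RealizesCharSeq (n p : ℕ) (x : A) : Prop :=
  x ∉ pmul A ⊤ ⊤ ∧ (LinearMap.mulLeft ℂ x) ^ (n - p - 1) ≠ 0 ∧
    Module.finrank ℂ (LinearMap.range (LinearMap.mulLeft ℂ x)) = n - p - 1

/-- `A` is `p`-filiform: `C(A) = (n-p, 1, …, 1)`, i.e. some `x ∈ A ∖ A²` realizes the
characteristic sequence, and for every `y ∈ A ∖ A²` one has `L_y^{n-p} = 0` and, if
`L_y^{n-p-1} ≠ 0`, then `rank L_y = n-p-1`. -/
def IsPFiliform (n p : ℕ) : Prop :=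
  (∃ x : A, RealizesCharSeq A n p x) ∧
    ∀ y : A, y ∉ pmul A ⊤ ⊤ →
      (LinearMap.mulLeft ℂ y) ^ (n - p) = 0 ∧
        ((LinearMap.mulLeft ℂ y) ^ (n - p - 1) ≠ 0 →
          Module.finrank ℂ (LinearMap.range (LinearMap.mulLeft ℂ y)) = n - p - 1)

/-- An adapted basis `{e_1,…,e_{n-p}, f_1,…,f_p}` of a `p`-filiform algebra:
a basis with `e_1` realizing the characteristic sequence, `e_1 e_i = e_{i+1}` for
`1 ≤ i ≤ n-p-1`, `e_1 e_{n-p} = 0`, and `e_1 f_j = 0` for `1 ≤ j ≤ p`. -/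
structure IsAdaptedBasis (n p : ℕ) (e f : ℕ → A) : Prop where
  indep : LinearIndependent ℂ
    (Sum.elim (fun i : Fin (n - p) => e (i.1 + 1)) (fun j : Fin p => f (j.1 + 1)))
  span : Submodule.span ℂ (Set.range
    (Sum.elim (fun i : Fin (n - p) => e (i.1 + 1)) (fun j : Fin p => f (j.1 + 1)))) = ⊤
  char : RealizesCharSeq A n p (e 1)
  mul_e : ∀ i, 1 ≤ i → i ≤ n - p - 1 → e 1 * e i = e (i + 1)
  mul_last : e 1 * e (n - p) = 0
  mul_f : ∀ j, 1 ≤ j → j ≤ p → e 1 * f j = 0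

/-- `s_i = dim 𝒜_i − 1` (truncated subtraction). -/
noncomputable def sdim (𝒜 : ℕ → Submodule ℂ A) (i : ℕ) : ℕ :=
  Module.finrank ℂ (𝒜 i) - 1

/-- `S k = s_1 + ⋯ + s_k` (with `S 0 = 0`). -/
noncomputable def sSum (𝒜 : ℕ → Submodule ℂ A) (k : ℕ) : ℕ :=
  ∑ j ∈ Finset.Icc 1 k, sdim A 𝒜 j

/-- A homogeneous adapted basis: an adapted basis with `e_i ∈ 𝒜_i` for
`1 ≤ i ≤ n-p` and `f_{s_1+⋯+s_{i-1}+1}, …, f_{s_1+⋯+s_i} ∈ 𝒜_i` for `1 ≤ i ≤ n-p`. -/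
structure IsHomogAdaptedBasis (n p : ℕ) (𝒜 : ℕ → Submodule ℂ A) (e f : ℕ → A) : Prop where
  adapted : IsAdaptedBasis A n p e f
  e_mem : ∀ i, 1 ≤ i → i ≤ n - p → e i ∈ 𝒜 i
  f_mem : ∀ i, 1 ≤ i → i ≤ n - p →
    ∀ t, sSum A 𝒜 (i - 1) < t → t ≤ sSum A 𝒜 i → f t ∈ 𝒜 i

lemma mem_pmul {I J : Submodule ℂ A} {x y : A} (hx : x ∈ I) (hy : y ∈ J) :
    x * y ∈ pmul A I J :=
  Submodule.subset_span (Set.mem_image2_of_mem hx hy)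

lemma pmul_mono {I I' J J' : Submodule ℂ A} (h1 : I ≤ I') (h2 : J ≤ J') :
    pmul A I J ≤ pmul A I' J' :=
  Submodule.span_mono (Set.image2_subset h1 h2)

lemma indep_sum_finrank_le {M : Type*} [AddCommGroup M] [Module ℂ M] [FiniteDimensional ℂ M]
    (𝒜 : ℕ → Submodule ℂ M) (h : iSupIndep 𝒜) (F : Finset ℕ) :
    ∑ m ∈ F, Module.finrank ℂ (𝒜 m) ≤ Module.finrank ℂ M := by
  have key : ∀ F : Finset ℕ,
      ∑ m ∈ F, Module.finrank ℂ (𝒜 m) = Module.finrank ℂ (F.sup 𝒜 : Submodule ℂ M) := by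
    intro F
    induction F using Finset.induction with
    | empty => rw [Finset.sum_empty, Finset.sup_empty, finrank_bot]
    | insert a F ha ih =>
      rw [Finset.sup_insert, Finset.sum_insert ha, ih]
      have hd : Disjoint (𝒜 a) (F.sup 𝒜) := by
        refine (h a).mono_right (Finset.sup_le fun b hb => ?_)
        exact le_iSup₂ (f := fun b (_ : b ≠ a) => 𝒜 b) b (fun e => ha (e ▸ hb))
      have hh := Submodule.finrank_sup_add_finrank_inf_eq (𝒜 a) (F.sup 𝒜)
      rw [hd.eq_bot, finrank_bot] at hh
      omega
  rw [key]
  exact Submodule.finrank_le _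

/-- for an `n`-dimensional naturally graded `p`-filiform complex
associative algebra (`n − p ≥ 4`) with a homogeneous adapted basis as produced by
Lemma 3.3, the products `f_{s_1+⋯+s_k+i}·f_{s_1+⋯+s_t+j}` vanish for
`1 ≤ k ≤ n−p−4`, `1 ≤ t ≤ n−p−3−k`, `s_{k+2}+1 ≤ i ≤ s_{k+1}` and
`s_{t+2}+1 ≤ j ≤ s_{t+1}`. -/
theorem f_mul_f_eq_zero (n p : ℕ) (hp : 1 ≤ p) (hnp : 4 ≤ n - p)
    [FiniteDimensional ℂ A] (hdim : Module.finrank ℂ A = n)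
    (hnil : IsNilpotentAlg A)
    (𝒜 : ℕ → Submodule ℂ A) (hgr : IsNaturalGrading A 𝒜)
    (hpf : IsPFiliform A n p)
    (e f : ℕ → A) (hbasis : IsHomogAdaptedBasis A n p 𝒜 e f)
    (hfe : ∀ k, 1 ≤ k → k ≤ n - p - 2 → ∀ j, 1 ≤ j → j ≤ n - p - k → ∀ i,
      (1 ≤ i → i ≤ sdim A 𝒜 (k + j + 1) →
        f (sSum A 𝒜 k + i) * e j = f (sSum A 𝒜 (k + j) + i)) ∧
      (sdim A 𝒜 (k + j + 1) + 1 ≤ i → i ≤ sdim A 𝒜 (k + j) →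
        f (sSum A 𝒜 k + i) * e j = 0)) :
    ∀ k t i j, 1 ≤ k → k ≤ n - p - 4 → 1 ≤ t → t ≤ n - p - 3 - k →
      sdim A 𝒜 (k + 2) + 1 ≤ i → i ≤ sdim A 𝒜 (k + 1) →
      sdim A 𝒜 (t + 2) + 1 ≤ j → j ≤ sdim A 𝒜 (t + 1) →
      f (sSum A 𝒜 k + i) * f (sSum A 𝒜 t + j) = 0 := by
  intro k t i j hk1 hk4 ht1 ht3 hi1 hi2 hj1 hj2
  obtain ⟨q, hq⟩ : ∃ q, n - p = q + 4 := ⟨n - p - 4, by omega⟩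
  have hi0 : 1 ≤ i := by have := hi1; omega
  have hj0 : 1 ≤ j := by have := hj1; omega
  -- basic facts about sSum
  have hSsucc : ∀ m : ℕ, sSum A 𝒜 (m + 1) = sSum A 𝒜 m + sdim A 𝒜 (m + 1) := by
    intro m
    exact Finset.sum_Icc_succ_top (by omega) _
  have hSmono : ∀ a b : ℕ, a ≤ b → sSum A 𝒜 a ≤ sSum A 𝒜 b := by
    intro a b hab
    exact Finset.sum_le_sum_of_subset (Finset.Icc_subset_Icc_right hab)
  -- nonzero basis vectors
  have hene : ∀ m, 1 ≤ m → m ≤ n - p → e m ≠ 0 := by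
    intro m h1 h2
    have := hbasis.adapted.indep.ne_zero (Sum.inl ⟨m - 1, by omega⟩)
    simpa [show m - 1 + 1 = m by omega] using this
  -- counting: sSum (n-p) ≤ p
  have hfr1 : ∀ m ∈ Finset.Icc 1 (n - p), 1 ≤ Module.finrank ℂ (𝒜 m) := by
    intro m hm
    rw [Finset.mem_Icc] at hm
    have hmem := hbasis.e_mem m hm.1 hm.2
    have hnt : Nontrivial (𝒜 m) :=
      ⟨⟨e m, hmem⟩, 0, by simp [Subtype.ext_iff, hene m hm.1 hm.2]⟩
    have : 0 < Module.finrank ℂ (𝒜 m) := Module.finrank_pos_iff.2 hnt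
    omega
  have hcount : sSum A 𝒜 (n - p) ≤ p := by
    have h2 : ∑ m ∈ Finset.Icc 1 (n - p), Module.finrank ℂ (𝒜 m) ≤ n := by
      rw [← hdim]
      exact indep_sum_finrank_le 𝒜 hgr.internal.submodule_iSupIndep _

    have h3 : sSum A 𝒜 (n - p) + (n - p)
        = ∑ m ∈ Finset.Icc 1 (n - p), Module.finrank ℂ (𝒜 m) := by
      have h4 : ∑ m ∈ Finset.Icc 1 (n - p), (Module.finrank ℂ (𝒜 m) - 1 + 1)
          = ∑ m ∈ Finset.Icc 1 (n - p), Module.finrank ℂ (𝒜 m) :=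
        Finset.sum_congr rfl fun m hm => Nat.sub_add_cancel (hfr1 m hm)
      rw [Finset.sum_add_distrib] at h4
      have h5 : ∑ _m ∈ Finset.Icc 1 (n - p), (1 : ℕ) = n - p := by
        simp [Nat.card_Icc]
      rw [h5] at h4
      unfold sSum sdim
      omega
    omega
  -- index bounds
  have hSk1 : sSum A 𝒜 k + i ≤ p := by
    have h1 : sSum A 𝒜 k + i ≤ sSum A 𝒜 (k + 1) := by rw [hSsucc k]; omega
    have h2 := hSmono (k + 1) (n - p) (by omega)
    omega
  have hSt1 : sSum A 𝒜 t + j ≤ p := by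
    have h1 : sSum A 𝒜 t + j ≤ sSum A 𝒜 (t + 1) := by rw [hSsucc t]; omega
    have h2 := hSmono (t + 1) (n - p) (by omega)
    omega
  -- products with e
  have hFe1 : f (sSum A 𝒜 k + i) * e 1 = 0 :=
    (hfe k hk1 (by omega) 1 le_rfl (by omega) i).2 hi1 hi2
  have he1F : e 1 * f (sSum A 𝒜 k + i) = 0 := hbasis.adapted.mul_f _ (by omega) hSk1
  have he1G : e 1 * f (sSum A 𝒜 t + j) = 0 := hbasis.adapted.mul_f _ (by omega) hSt1
  have hFe : ∀ m, 1 ≤ m → m ≤ n - p - 1 → f (sSum A 𝒜 k + i) * e m = 0 := by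
    intro m h1 h2
    rcases eq_or_lt_of_le h1 with h | h
    · rw [← h]; exact hFe1
    · have hz := hbasis.adapted.mul_e (m - 1) (by omega) (by omega)
      rw [show m - 1 + 1 = m by omega] at hz
      rw [← hz, ← mul_assoc, hFe1, zero_mul]
  -- memberships
  have hFmem : f (sSum A 𝒜 k + i) ∈ 𝒜 (k + 1) := by
    refine hbasis.f_mem (k + 1) (by omega) (by omega) _ ?_ ?_
    · simpa using (by omega : sSum A 𝒜 k < sSum A 𝒜 k + i)
    · rw [hSsucc k]; omega
  have hGmem : f (sSum A 𝒜 t + j) ∈ 𝒜 (t + 1) := by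
    refine hbasis.f_mem (t + 1) (by omega) (by omega) _ ?_ ?_
    · simpa using (by omega : sSum A 𝒜 t < sSum A 𝒜 t + j)
    · rw [hSsucc t]; omega
  have hXmem : f (sSum A 𝒜 k + i) * f (sSum A 𝒜 t + j) ∈ 𝒜 (k + t + 2) := by
    have h6 := hgr.mul_le (k + 1) (t + 1) (by omega) (by omega) (mem_pmul A hFmem hGmem)
    rw [show k + 1 + (t + 1) = k + t + 2 by omega] at h6
    exact h6
  have hFA2 : f (sSum A 𝒜 k + i) ∈ pmul A ⊤ ⊤ := by
    have h1 : 𝒜 (k + 1) = pmul A (𝒜 1) (𝒜 k) := hgr.succ k hk1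
    exact pmul_mono A le_top le_top (h1 ▸ hFmem)
  set y := e 1 + f (sSum A 𝒜 k + i) with hy
  have hyA2 : y ∉ pmul A ⊤ ⊤ := by
    intro hmem
    have h8 : e 1 = y - f (sSum A 𝒜 k + i) := by rw [hy, add_sub_cancel_right]
    exact hbasis.adapted.char.1 (h8 ▸ Submodule.sub_mem _ hmem hFA2)
  have hLy : ∀ m, 1 ≤ m → m ≤ n - p - 1 → y * e m = e (m + 1) := by
    intro m h1 h2
    rw [hy, add_mul, hbasis.adapted.mul_e m h1 h2, hFe m h1 h2, add_zero]
  have hpow : ∀ m, m ≤ n - p - 1 → ((LinearMap.mulLeft ℂ y) ^ m) (e 1) = e (m + 1) := by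
    intro m
    induction m with
    | zero => intro _; simp
    | succ m ih =>
      intro h
      rw [pow_succ', Module.End.mul_apply, ih (by omega), LinearMap.mulLeft_apply,
        hLy (m + 1) (by omega) h]
  have hLpow : (LinearMap.mulLeft ℂ y) ^ (n - p - 1) ≠ 0 := by
    intro h0
    have h1 := hpow (n - p - 1) le_rfl
    rw [h0, LinearMap.zero_apply, show n - p - 1 + 1 = n - p by omega] at h1
    exact hene (n - p) (by omega) le_rfl h1.symm
  have hrank := (hpf.2 y hyA2).2 hLpow
  -- the span of e_2, …, e_{n-p}
  have hEindep : LinearIndependent ℂ (fun r : Fin (q + 3) => e (r.1 + 2)) := by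
    have hinj : Function.Injective
        (fun r : Fin (q + 3) => (Sum.inl ⟨r.1 + 1, by omega⟩ : Fin (n - p) ⊕ Fin p)) := by
      intro a b hab
      simp only [Sum.inl.injEq, Fin.mk.injEq] at hab
      exact Fin.ext (by omega)
    exact hbasis.adapted.indep.comp _ hinj
  have hErank : Module.finrank ℂ
      (Submodule.span ℂ (Set.range (fun r : Fin (q + 3) => e (r.1 + 2)))) = q + 3 := by
    rw [finrank_span_eq_card hEindep]; simp
  have hEle : Submodule.span ℂ (Set.range (fun r : Fin (q + 3) => e (r.1 + 2)))
      ≤ LinearMap.range (LinearMap.mulLeft ℂ y) := by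
    rw [Submodule.span_le]
    rintro x ⟨r, rfl⟩
    exact LinearMap.mem_range.2
      ⟨e (r.1 + 1), by rw [LinearMap.mulLeft_apply]; exact hLy (r.1 + 1) (by omega) (by omega)⟩
  have hEeq : Submodule.span ℂ (Set.range (fun r : Fin (q + 3) => e (r.1 + 2)))
      = LinearMap.range (LinearMap.mulLeft ℂ y) :=
    Submodule.eq_of_le_of_finrank_le hEle (by rw [hrank, hErank]; omega)
  have hXE : f (sSum A 𝒜 k + i) * f (sSum A 𝒜 t + j)
      ∈ Submodule.span ℂ (Set.range (fun r : Fin (q + 3) => e (r.1 + 2))) := by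
    rw [hEeq]
    exact LinearMap.mem_range.2
      ⟨f (sSum A 𝒜 t + j), by rw [LinearMap.mulLeft_apply, hy, add_mul, he1G, zero_add]⟩
  obtain ⟨c, hc⟩ := (Submodule.mem_span_range_iff_exists_fun ℂ).1 hXE
  have he1X : e 1 * (f (sSum A 𝒜 k + i) * f (sSum A 𝒜 t + j)) = 0 := by
    rw [← mul_assoc, he1F, zero_mul]
  have h0 : ∑ r : Fin (q + 3), c r • (e 1 * e (r.1 + 2)) = 0 := by
    have h1 : e 1 * (∑ r : Fin (q + 3), c r • e (r.1 + 2)) = 0 := by rw [hc]; exact he1X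
    rw [Finset.mul_sum] at h1
    simpa [mul_smul_comm] using h1
  rw [Fin.sum_univ_castSucc] at h0
  have hlast : e 1 * e ((Fin.last (q + 2)).1 + 2) = 0 := by
    have h7 := hbasis.adapted.mul_last
    rw [hq] at h7
    simpa [Fin.val_last] using h7
  rw [hlast, smul_zero, add_zero] at h0
  have h0' : ∑ r : Fin (q + 2), c r.castSucc • e (r.1 + 3) = 0 := by
    rw [← h0]
    refine Finset.sum_congr rfl fun r _ => ?_
    congr 1
    have h4 := hbasis.adapted.mul_e (r.1 + 2) (by omega) (by omega)
    simp only [Fin.coe_castSucc]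
    rw [h4]
  have hind2 : LinearIndependent ℂ (fun r : Fin (q + 2) => e (r.1 + 3)) := by
    have hinj : Function.Injective
        (fun r : Fin (q + 2) => (Sum.inl ⟨r.1 + 2, by omega⟩ : Fin (n - p) ⊕ Fin p)) := by
      intro a b hab
      simp only [Sum.inl.injEq, Fin.mk.injEq] at hab
      exact Fin.ext (by omega)
    exact hbasis.adapted.indep.comp _ hinj
  have hc0 : ∀ r : Fin (q + 2), c r.castSucc = 0 :=
    Fintype.linearIndependent_iff.1 hind2 (fun r => c r.castSucc) h0'
  have hX : f (sSum A 𝒜 k + i) * f (sSum A 𝒜 t + j) = c (Fin.last (q + 2)) • e (n - p) := by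
    rw [← hc, Fin.sum_univ_castSucc]
    have hz : (∑ r : Fin (q + 2), c r.castSucc • e ((Fin.castSucc r).1 + 2)) = 0 :=
      Finset.sum_eq_zero fun r _ => by rw [hc0 r, zero_smul]
    rw [hz, zero_add, Fin.val_last, show q + 2 + 2 = n - p from by omega]
  by_cases hcl : c (Fin.last (q + 2)) = 0
  · rw [hX, hcl, zero_smul]
  · exfalso
    have henp2 : e (n - p) ∈ 𝒜 (k + t + 2) := by
      have h5 : (c (Fin.last (q + 2)))⁻¹ • (f (sSum A 𝒜 k + i) * f (sSum A 𝒜 t + j))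
          ∈ 𝒜 (k + t + 2) := Submodule.smul_mem _ _ hXmem
      rw [hX, smul_smul, inv_mul_cancel₀ hcl, one_smul] at h5
      exact h5
    have hne2 : (k + t + 2) ≠ (n - p) := by omega
    have hdisj : Disjoint (𝒜 (k + t + 2)) (𝒜 (n - p)) :=
      hgr.internal.submodule_iSupIndep.pairwiseDisjoint hne2
    exact hene (n - p) (by omega) le_rfl
      (Submodule.disjoint_def.1 hdisj _ henp2 (hbasis.e_mem (n - p) (by omega) le_rfl))
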